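/- Let M be an n×m (0,1)-matrix of rank m, with n,m > 1, whose unique solution λ of Mλ = 𝟙 has all coordinates strictly positive. Then the matrix z_{[m]}(M) obtained by complementing all columns of M also has rank m and its unique solution of z_{[m]}(M)x = 𝟙 has all coordinates strictly positive. -/
import Mathlib


/-- The matrix obtained from `M` by complementing every column (`a ↦ 𝟙 − a`). -/
def zAll {n m : ℕ} (M : Matrix (Fin n) (Fin m) ℝ) : Matrix (Fin n) (Fin m) ℝ :=
  fun i j => 1 - M i j

open Module

lemma rank_eq_iff_inj {n m : ℕ} (M : Matrix (Fin n) (Fin m) ℝ) :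
    M.rank = m ↔ Function.Injective M.mulVec := by
  have hrn := LinearMap.finrank_range_add_finrank_ker M.mulVecLin
  have hdom : finrank ℝ (Fin m → ℝ) = m := by simp
  constructor
  · intro h x y hxy
    have hker : finrank ℝ (LinearMap.ker M.mulVecLin) = 0 := by
      rw [hdom] at hrn
      have : M.rank = finrank ℝ (LinearMap.range M.mulVecLin) := rfl
      omega
    have hker' : LinearMap.ker M.mulVecLin = ⊥ :=
      Submodule.finrank_eq_zero.mp hker
    have hinj := LinearMap.ker_eq_bot.mp hker'
    exact hinj (show M.mulVecLin x = M.mulVecLin y from hxy)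
  · intro h
    have hker' : LinearMap.ker M.mulVecLin = ⊥ :=
      LinearMap.ker_eq_bot.mpr h
    have hk0 : finrank ℝ (LinearMap.ker M.mulVecLin) = 0 := by
      rw [hker']; exact finrank_bot ℝ _
    have : M.rank = finrank ℝ (LinearMap.range M.mulVecLin) := rfl
    omega

lemma zAll_mulVec {n m : ℕ} (M : Matrix (Fin n) (Fin m) ℝ) (x : Fin m → ℝ) (i : Fin n) :
    (zAll M).mulVec x i = (∑ j, x j) - M.mulVec x i := by
  simp [zAll, Matrix.mulVec, dotProduct, sub_mul, Finset.sum_sub_distrib]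

/-- If `M` is an `n × m` `(0,1)`-matrix of rank `m` (with `n, m > 1`) whose solution of
`Mλ = 𝟙` is strictly positive, then the matrix obtained by complementing all columns
also has rank `m` and its unique solution of `z_{[m]}(M) x = 𝟙` is strictly positive. -/
theorem stmt12 (n m : ℕ) (hn : 1 < n) (hm : 1 < m)
    (M : Matrix (Fin n) (Fin m) ℝ) (h01 : ∀ i j, M i j = 0 ∨ M i j = 1)
    (hrk : M.rank = m) (l : Fin m → ℝ) (hMl : M.mulVec l = 1)
    (hpos : ∀ i, 0 < l i) :
    (zAll M).rank = m ∧
      ∃ μ : Fin m → ℝ, (zAll M).mulVec μ = 1 ∧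
        (∀ x : Fin m → ℝ, (zAll M).mulVec x = 1 → x = μ) ∧ ∀ i, 0 < μ i := by
  have hinj : Function.Injective M.mulVec := (rank_eq_iff_inj M).mp hrk
  -- some entry of M is 0
  have hzero : ∃ i j, M i j = 0 := by
    by_contra hc
    push_neg at hc
    have hone : ∀ i j, M i j = 1 := fun i j => (h01 i j).resolve_left (hc i j)
    -- then mulVec is not injective
    have a : Fin m := ⟨0, by omega⟩
    have hab : (⟨0, by omega⟩ : Fin m) ≠ ⟨1, hm⟩ := by simp [Fin.ext_iff]
    have hx0 : M.mulVec (Pi.single (⟨0, by omega⟩ : Fin m) (1:ℝ)) =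
        M.mulVec (Pi.single (⟨1, hm⟩ : Fin m) (1:ℝ)) := by
      funext i
      simp [Matrix.mulVec_single, hone]
    have := hinj hx0
    have h1 := congrFun this ⟨0, by omega⟩
    rw [Pi.single_eq_same, Pi.single_eq_of_ne hab] at h1
    exact one_ne_zero h1
  obtain ⟨i0, j0, hij0⟩ := hzero
  -- sum of l > 1
  have hrow : ∑ j, M i0 j * l j = 1 := by
    have := congrFun hMl i0
    simpa [Matrix.mulVec, dotProduct] using this
  have hS : 1 < ∑ j, l j := by
    rw [← hrow]
    apply Finset.sum_lt_sum
    · intro j _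
      rcases h01 i0 j with h | h <;> simp [h, (hpos j).le]
    · exact ⟨j0, Finset.mem_univ _, by simp [hij0]; exact hpos j0⟩
  set S := ∑ j, l j with hSdef
  have hS1 : 0 < S - 1 := by linarith
  -- injectivity of zAll M
  have hzinj : Function.Injective (zAll M).mulVec := by
    have hker : ∀ x : Fin m → ℝ, (zAll M).mulVec x = 0 → x = 0 := by
      intro x hx
      have hMx : ∀ i, M.mulVec x i = ∑ j, x j := by
        intro i
        have := congrFun hx i
        rw [zAll_mulVec] at this
        simpa using (sub_eq_zero.mp this).symm
      have hMls : M.mulVec ((∑ j, x j) • l) = M.mulVec x := by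
        funext i
        rw [Matrix.mulVec_smul, hMx i, Pi.smul_apply, congrFun hMl i]
        simp
      have hxl : x = (∑ j, x j) • l := (hinj hMls).symm
      have hsum : ∑ j, x j = (∑ j, x j) * S := by
        conv_lhs => rw [hxl]
        simp only [Pi.smul_apply, smul_eq_mul, ← Finset.mul_sum, hSdef]
      have hx0 : ∑ j, x j = 0 := by
        by_contra h0
        have : (∑ j, x j) * S - (∑ j, x j) * 1 = 0 := by linarith
        rw [← mul_sub] at this
        rcases mul_eq_zero.mp this with h | h
        · exact h0 h
        · linarith
      rw [hxl, hx0, zero_smul]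
    intro x y hxy
    have : (zAll M).mulVec (x - y) = 0 := by
      rw [Matrix.mulVec_sub, hxy, sub_self]
    have := hker _ this
    exact sub_eq_zero.mp this
  refine ⟨(rank_eq_iff_inj (zAll M)).mpr hzinj, fun j => l j / (S - 1), ?_, ?_, ?_⟩
  · funext i
    rw [zAll_mulVec]
    have h1 : ∑ j, l j / (S - 1) = S / (S - 1) := by
      rw [← Finset.sum_div]
    have h2 : M.mulVec (fun j => l j / (S - 1)) i = 1 / (S - 1) := by
      have : (fun j => l j / (S - 1)) = (S - 1)⁻¹ • l := by
        funext j; simp [div_eq_inv_mul]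
      rw [this, Matrix.mulVec_smul, Pi.smul_apply, congrFun hMl i]
      simp [div_eq_inv_mul]
    rw [h1, h2]
    have : (1 : ((Fin n) → ℝ)) i = 1 := rfl
    rw [this]
    field_simp
  · intro x hx
    apply hzinj
    rw [hx]
    funext i
    rw [zAll_mulVec]
    have h1 : ∑ j, l j / (S - 1) = S / (S - 1) := by
      rw [← Finset.sum_div]
    have h2 : M.mulVec (fun j => l j / (S - 1)) i = 1 / (S - 1) := by
      have : (fun j => l j / (S - 1)) = (S - 1)⁻¹ • l := by
        funext j; simp [div_eq_inv_mul]
      rw [this, Matrix.mulVec_smul, Pi.smul_apply, congrFun hMl i]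
      simp [div_eq_inv_mul]
    rw [h1, h2]
    have : (1 : ((Fin n) → ℝ)) i = 1 := rfl
    rw [this]
    field_simp
  · intro j
    exact div_pos (hpos j) hS1
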